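/- Let d > 0 be a real number. If H is a cover graph for G via L satisfying Δ̄_L(H) ≤ d and |L(v)| ≥ 4d for every vertex v of G, then H has an independent transversal with respect to L. -/

import Mathlib

open Finset

/-- `H` is a cover graph for `G` via `L`. -/
def IsCoverGraph {V W : Type} (G : SimpleGraph V) (H : SimpleGraph W)
    (L : V → Finset W) : Prop :=
  (∀ v v' : V, v ≠ v' → Disjoint (L v) (L v')) ∧
  (∀ w : W, ∃ v : V, w ∈ L v) ∧
  (∀ v v' : V, ¬ G.Adj v v' → ∀ c ∈ L v, ∀ c' ∈ L v', ¬ H.Adj c c')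

section AuxIT

set_option linter.unusedSectionVars false

variable {V W : Type} [Fintype V] [Fintype W] [DecidableEq V] [DecidableEq W]

def ITset (H : SimpleGraph W) [DecidableRel H.Adj] (L : V → Finset W) (S : Finset V) :
    Finset (Finset W) :=
  (S.biUnion L).powerset.filter fun A =>
    (∀ v ∈ S, (A ∩ L v).card = 1) ∧ ∀ w ∈ A, ∀ w' ∈ A, ¬ H.Adj w w'

lemma mem_ITset {H : SimpleGraph W} [DecidableRel H.Adj] {L : V → Finset W} {S : Finset V}
    {A : Finset W} :
    A ∈ ITset H L S ↔ A ⊆ S.biUnion L ∧ (∀ v ∈ S, (A ∩ L v).card = 1) ∧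
      ∀ w ∈ A, ∀ w' ∈ A, ¬ H.Adj w w' := by
  simp [ITset, and_assoc]

variable {H : SimpleGraph W} [DecidableRel H.Adj] {L : V → Finset W}
  (hL : ∀ v v' : V, v ≠ v' → Disjoint (L v) (L v'))

include hL

/-- Members of partial transversals on `S` avoid parts outside `S`. -/
lemma disj_of_not_mem {S : Finset V} {B : Finset W} (hB : B ∈ ITset H L S)
    {v : V} (hv : v ∉ S) : Disjoint B (L v) := by
  rw [Finset.disjoint_left]
  intro x hxB hxv
  obtain ⟨u, huS, hxu⟩ := mem_biUnion.mp ((mem_ITset.mp hB).1 hxB)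
  have : u ≠ v := fun h => hv (h ▸ huS)
  exact (Finset.disjoint_left.mp (hL u v this)) hxu hxv

lemma step_lower (S : Finset V) (v : V) (hv : v ∈ S) :
    ∑ B ∈ ITset H L (S.erase v), ((L v).filter fun c => ∀ w ∈ B, ¬ H.Adj c w).card
      ≤ (ITset H L S).card := by
  classical
  have hdisj : ∀ B ∈ ITset H L (S.erase v), Disjoint B (L v) := fun B hB =>
    disj_of_not_mem hL hB (notMem_erase v S)
  -- the inserted sets are in ITset H L S
  have hins : ∀ B ∈ ITset H L (S.erase v), ∀ c ∈ (L v).filter (fun c => ∀ w ∈ B, ¬ H.Adj c w),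
      insert c B ∈ ITset H L S := by
    intro B hB c hc
    rw [mem_filter] at hc
    obtain ⟨hcL, hcgood⟩ := hc
    obtain ⟨hBsub, hBcard, hBind⟩ := mem_ITset.mp hB
    refine mem_ITset.mpr ⟨?_, ?_, ?_⟩
    · intro x hx
      rcases mem_insert.mp hx with rfl | hxB
      · exact mem_biUnion.mpr ⟨v, hv, hcL⟩
      · exact biUnion_subset_biUnion_of_subset_left L (erase_subset v S) (hBsub hxB)
    · intro u huS
      by_cases huv : u = v
      · subst huv
        have : insert c B ∩ L u = insert c (B ∩ L u) := by
          rw [insert_inter_of_mem hcL]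
        have he : B ∩ L u = ∅ := Finset.disjoint_iff_inter_eq_empty.mp (hdisj B hB)
        rw [this, he]
        simp
      · have : insert c B ∩ L u = B ∩ L u := by
          apply insert_inter_of_notMem
          exact Finset.disjoint_left.mp (hL v u (Ne.symm huv)) hcL
        rw [this]
        exact hBcard u (mem_erase.mpr ⟨huv, huS⟩)
    · intro w hw w' hw'
      rcases mem_insert.mp hw with rfl | hwB <;> rcases mem_insert.mp hw' with rfl | hw'B
      · exact H.irrefl
      · exact hcgood w' hw'B
      · exact fun h => hcgood w hwB (H.adj_symm h)
      · exact hBind w hwB w' hw'B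
  have hinj : ∀ B ∈ ITset H L (S.erase v),
      Set.InjOn (fun c => insert c B) ((L v).filter fun c => ∀ w ∈ B, ¬ H.Adj c w) := by
    intro B hB c hc c' hc' hcc
    simp only [coe_filter, Set.mem_setOf_eq] at hc hc'
    have hcB : c ∉ B := fun h => Finset.disjoint_left.mp (hdisj B hB) h hc.1
    simp only at hcc
    have : c ∈ insert c' B := hcc ▸ mem_insert_self c B
    rcases mem_insert.mp this with h | h
    · exact h
    · exact absurd h hcB
  have himg : ∀ B ∈ ITset H L (S.erase v), ∀ B' ∈ ITset H L (S.erase v), B ≠ B' →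
      Disjoint (((L v).filter fun c => ∀ w ∈ B, ¬ H.Adj c w).image (fun c => insert c B))
        (((L v).filter fun c => ∀ w ∈ B', ¬ H.Adj c w).image (fun c => insert c B')) := by
    intro B hB B' hB' hne
    rw [Finset.disjoint_left]
    rintro A hA hA'
    obtain ⟨c, hc, rfl⟩ := mem_image.mp hA
    obtain ⟨c', hc', hcc⟩ := mem_image.mp hA'
    apply hne
    have h1 : insert c B \ L v = B := by
      rw [insert_sdiff_of_mem _ (mem_filter.mp hc).1]
      exact sdiff_eq_self_of_disjoint (hdisj B hB)
    have h2 : insert c' B' \ L v = B' := by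
      rw [insert_sdiff_of_mem _ (mem_filter.mp hc').1]
      exact sdiff_eq_self_of_disjoint (hdisj B' hB')
    rw [← h1, ← h2, hcc]
  calc ∑ B ∈ ITset H L (S.erase v), ((L v).filter fun c => ∀ w ∈ B, ¬ H.Adj c w).card
      = ∑ B ∈ ITset H L (S.erase v),
          (((L v).filter fun c => ∀ w ∈ B, ¬ H.Adj c w).image (fun c => insert c B)).card := by
        refine sum_congr rfl fun B hB => ?_
        exact (card_image_of_injOn (hinj B hB)).symm
    _ = ((ITset H L (S.erase v)).biUnion fun B =>
          ((L v).filter fun c => ∀ w ∈ B, ¬ H.Adj c w).image (fun c => insert c B)).card :=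
        (card_biUnion himg).symm
    _ ≤ (ITset H L S).card := by
        apply card_le_card
        intro A hA
        obtain ⟨B, hB, hAB⟩ := mem_biUnion.mp hA
        obtain ⟨c, hc, rfl⟩ := mem_image.mp hAB
        exact hins B hB c hc

lemma count_contain (T : Finset V) (u : V) (hu : u ∈ T) (w : W) (hw : w ∈ L u) :
    ((ITset H L T).filter fun B => w ∈ B).card ≤ (ITset H L (T.erase u)).card := by
  classical
  apply Finset.card_le_card_of_injOn (fun B => B.erase w)
  · intro B hB
    rw [mem_coe] at hB ⊢; rw [mem_filter] at hB
    obtain ⟨hBIT, hwB⟩ := hB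
    obtain ⟨hBsub, hBcard, hBind⟩ := mem_ITset.mp hBIT
    refine mem_ITset.mpr ⟨?_, ?_, ?_⟩
    · intro x hx
      obtain ⟨hxw, hxB⟩ := mem_erase.mp hx
      obtain ⟨u', hu'T, hxu'⟩ := mem_biUnion.mp (hBsub hxB)
      refine mem_biUnion.mpr ⟨u', mem_erase.mpr ⟨?_, hu'T⟩, hxu'⟩
      rintro rfl
      -- x and w both in B ∩ L u', card 1, so x = w, contradiction
      have h1 := hBcard u' hu'T
      obtain ⟨a, ha⟩ := Finset.card_eq_one.mp h1
      have hx' : x ∈ B ∩ L u' := mem_inter.mpr ⟨hxB, hxu'⟩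
      have hw' : w ∈ B ∩ L u' := mem_inter.mpr ⟨hwB, hw⟩
      rw [ha, mem_singleton] at hx' hw'
      exact hxw (hx'.trans hw'.symm)
    · intro t htT
      obtain ⟨htu, htT'⟩ := mem_erase.mp htT
      have hwt : w ∉ L t := Finset.disjoint_left.mp (hL u t (Ne.symm htu)) hw
      have : B.erase w ∩ L t = B ∩ L t := by
        ext x
        simp only [mem_inter, mem_erase]
        constructor
        · rintro ⟨⟨_, h1⟩, h2⟩; exact ⟨h1, h2⟩
        · rintro ⟨h1, h2⟩
          exact ⟨⟨fun h => hwt (h ▸ h2), h1⟩, h2⟩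
      rw [this]
      exact hBcard t htT'
    · intro x hx y hy
      exact hBind x (erase_subset w B hx) y (erase_subset w B hy)
  · intro B hB B' hB' hBB
    rw [coe_filter, Set.mem_setOf_eq] at hB hB'
    simp only at hBB
    rw [← insert_erase hB.2, ← insert_erase hB'.2, hBB]

omit hL in
lemma lower_per_B (B : Finset W) (v : V) :
    (L v).card ≤ ((L v).filter fun c => ∀ w ∈ B, ¬ H.Adj c w).card +
      ∑ c ∈ L v, (B.filter fun w => H.Adj c w).card := by
  classical
  have h1 : (L v).card = ((L v).filter fun c => ∀ w ∈ B, ¬ H.Adj c w).card +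
      ((L v).filter fun c => ¬ ∀ w ∈ B, ¬ H.Adj c w).card :=
    (card_filter_add_card_filter_not _).symm
  rw [h1]
  gcongr
  calc ((L v).filter fun c => ¬ ∀ w ∈ B, ¬ H.Adj c w).card
      = ∑ c ∈ (L v).filter fun c => ¬ ∀ w ∈ B, ¬ H.Adj c w, 1 := by rw [sum_const, smul_eq_mul, mul_one]
    _ ≤ ∑ c ∈ (L v).filter fun c => ¬ ∀ w ∈ B, ¬ H.Adj c w, (B.filter fun w => H.Adj c w).card := by
        apply sum_le_sum
        intro c hc
        rw [mem_filter] at hc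
        push_neg at hc
        obtain ⟨w, hwB, hadj⟩ := hc.2
        exact card_pos.mpr ⟨w, mem_filter.mpr ⟨hwB, hadj⟩⟩
    _ ≤ ∑ c ∈ L v, (B.filter fun w => H.Adj c w).card :=
        sum_le_sum_of_subset (filter_subset _ _)

omit hL in
lemma badsum_swap (T : Finset (Finset W)) (v : V) :
    ∑ B ∈ T, ∑ c ∈ L v, (B.filter fun w => H.Adj c w).card =
    ∑ c ∈ L v, ∑ w ∈ H.neighborFinset c, (T.filter fun B => w ∈ B).card := by
  classical
  rw [Finset.sum_comm]
  refine sum_congr rfl fun c _ => ?_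
  have h1 : ∀ B : Finset W, (B.filter fun w => H.Adj c w) =
      (H.neighborFinset c).filter (· ∈ B) := by
    intro B
    ext x
    simp [SimpleGraph.mem_neighborFinset, and_comm]
  calc ∑ B ∈ T, (B.filter fun w => H.Adj c w).card
      = ∑ B ∈ T, ∑ w ∈ H.neighborFinset c, (if w ∈ B then 1 else 0) := by
        refine sum_congr rfl fun B _ => ?_
        rw [h1 B, card_filter]
    _ = ∑ w ∈ H.neighborFinset c, ∑ B ∈ T, (if w ∈ B then 1 else 0) := Finset.sum_comm
    _ = ∑ w ∈ H.neighborFinset c, (T.filter fun B => w ∈ B).card := by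
        refine sum_congr rfl fun w _ => ?_
        rw [card_filter]

lemma key_ineq (hcov : ∀ w : W, ∃ v : V, w ∈ L v) (d : ℝ) (hd : 0 < d)
    (havg : ∀ v : V, ∑ c ∈ L v, (H.degree c : ℝ) ≤ d * (L v).card)
    (hsize : ∀ v : V, 4 * d ≤ ((L v).card : ℝ)) :
    ∀ n : ℕ, ∀ S : Finset V, S.card ≤ n → ∀ v ∈ S,
      ((L v).card : ℝ) * ((ITset H L (S.erase v)).card : ℝ) ≤
        2 * ((ITset H L S).card : ℝ) := by
  intro n
  induction n with
  | zero =>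
    intro S hS v hv
    rw [Nat.le_zero, card_eq_zero] at hS
    subst hS
    exact absurd hv (notMem_empty v)
  | succ n IH =>
    intro S hS v hv
    set S' := S.erase v with hS'def
    have hS'card : S'.card ≤ n := by
      rw [hS'def, card_erase_of_mem hv]
      omega
    -- natural-number inequality from double counting
    have step1 : (L v).card * (ITset H L S').card ≤ (ITset H L S).card +
        ∑ c ∈ L v, ∑ w ∈ H.neighborFinset c, ((ITset H L S').filter fun B => w ∈ B).card := by
      calc (L v).card * (ITset H L S').card
          = ∑ _B ∈ ITset H L S', (L v).card := by rw [sum_const, smul_eq_mul, mul_comm]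
        _ ≤ ∑ B ∈ ITset H L S', (((L v).filter fun c => ∀ w ∈ B, ¬ H.Adj c w).card +
              ∑ c ∈ L v, (B.filter fun w => H.Adj c w).card) :=
            sum_le_sum fun B _ => lower_per_B B v
        _ = (∑ B ∈ ITset H L S', ((L v).filter fun c => ∀ w ∈ B, ¬ H.Adj c w).card) +
              ∑ B ∈ ITset H L S', ∑ c ∈ L v, (B.filter fun w => H.Adj c w).card := sum_add_distrib
        _ ≤ (ITset H L S).card +
              ∑ c ∈ L v, ∑ w ∈ H.neighborFinset c, ((ITset H L S').filter fun B => w ∈ B).card := by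
            gcongr ?_ + ?_
            · exact step_lower hL S v hv
            · rw [badsum_swap]
    -- per-vertex bound, in ℝ
    have step2 : ∀ c ∈ L v, ∀ w ∈ H.neighborFinset c,
        (((ITset H L S').filter fun B => w ∈ B).card : ℝ) * (2 * d) ≤
          ((ITset H L S').card : ℝ) := by
      intro c _ w _
      obtain ⟨u, hwu⟩ := hcov w
      by_cases huS' : u ∈ S'
      · have h3 := count_contain (H := H) hL S' u huS' w hwu
        have h4 := IH S' hS'card u huS'
        have h5 := hsize u
        have h6 : (0:ℝ) ≤ ((ITset H L (S'.erase u)).card : ℝ) := Nat.cast_nonneg _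
        have h3' : (((ITset H L S').filter fun B => w ∈ B).card : ℝ) ≤
            ((ITset H L (S'.erase u)).card : ℝ) := Nat.cast_le.mpr h3
        have h7 : (0:ℝ) ≤ (((ITset H L S').filter fun B => w ∈ B).card : ℝ) :=
          Nat.cast_nonneg _
        nlinarith
      · have : ((ITset H L S').filter fun B => w ∈ B) = ∅ := by
          rw [filter_eq_empty_iff]
          intro B hB
          exact fun hwB => Finset.disjoint_left.mp (disj_of_not_mem hL hB huS') hwB hwu
        rw [this]
        simp
    -- sum up step2
    have step3 : (∑ c ∈ L v, ∑ w ∈ H.neighborFinset c,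
          (((ITset H L S').filter fun B => w ∈ B).card : ℝ)) * (2 * d) ≤
        d * (L v).card * ((ITset H L S').card : ℝ) := by
      calc (∑ c ∈ L v, ∑ w ∈ H.neighborFinset c,
              (((ITset H L S').filter fun B => w ∈ B).card : ℝ)) * (2 * d)
          = ∑ c ∈ L v, ∑ w ∈ H.neighborFinset c,
              ((((ITset H L S').filter fun B => w ∈ B).card : ℝ) * (2 * d)) := by
            rw [sum_mul]
            exact sum_congr rfl fun c _ => sum_mul _ _ _
        _ ≤ ∑ c ∈ L v, ∑ _w ∈ H.neighborFinset c, ((ITset H L S').card : ℝ) :=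
            sum_le_sum fun c hc => sum_le_sum fun w hw => step2 c hc w hw
        _ = ∑ c ∈ L v, (H.degree c : ℝ) * ((ITset H L S').card : ℝ) := by
            refine sum_congr rfl fun c _ => ?_
            rw [sum_const, SimpleGraph.card_neighborFinset_eq_degree, nsmul_eq_mul]
        _ = (∑ c ∈ L v, (H.degree c : ℝ)) * ((ITset H L S').card : ℝ) := (sum_mul _ _ _).symm
        _ ≤ d * (L v).card * ((ITset H L S').card : ℝ) := by
            apply mul_le_mul_of_nonneg_right (havg v) (Nat.cast_nonneg _)
    -- combine
    have step1' : ((L v).card : ℝ) * ((ITset H L S').card : ℝ) ≤ ((ITset H L S).card : ℝ) +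
        ∑ c ∈ L v, ∑ w ∈ H.neighborFinset c,
          (((ITset H L S').filter fun B => w ∈ B).card : ℝ) := by
      exact_mod_cast step1
    set X : ℝ := ∑ c ∈ L v, ∑ w ∈ H.neighborFinset c,
      (((ITset H L S').filter fun B => w ∈ B).card : ℝ)
    have h2X : 2 * X ≤ ((L v).card : ℝ) * ((ITset H L S').card : ℝ) := by
      have := step3
      nlinarith
    linarith

lemma ITset_empty' : ITset H L (∅ : Finset V) = {∅} := by
  ext A
  simp only [mem_ITset, mem_singleton]
  constructor
  · rintro ⟨h1, _, _⟩
    simpa [subset_empty] using h1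
  · rintro rfl
    simp

lemma ITset_pos (hcov : ∀ w : W, ∃ v : V, w ∈ L v) (d : ℝ) (hd : 0 < d)
    (havg : ∀ v : V, ∑ c ∈ L v, (H.degree c : ℝ) ≤ d * (L v).card)
    (hsize : ∀ v : V, 4 * d ≤ ((L v).card : ℝ)) :
    ∀ n : ℕ, ∀ S : Finset V, S.card ≤ n → 0 < (ITset H L S).card := by
  intro n
  induction n with
  | zero =>
    intro S hS
    rw [Nat.le_zero, card_eq_zero] at hS
    subst hS
    rw [ITset_empty' hL]
    simp
  | succ n IH =>
    intro S hS
    rcases S.eq_empty_or_nonempty with rfl | ⟨v, hv⟩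
    · rw [ITset_empty' hL]
      simp
    · have hk := key_ineq hL hcov d hd havg hsize (n + 1) S hS v hv
      have h1 : 0 < (ITset H L (S.erase v)).card := by
        apply IH
        rw [card_erase_of_mem hv]
        omega
      have h2 : (0:ℝ) < ((L v).card : ℝ) := lt_of_lt_of_le (by linarith) (hsize v)
      have h3 : (0:ℝ) < ((ITset H L (S.erase v)).card : ℝ) := by exact_mod_cast h1
      have h4 : (0:ℝ) < ((ITset H L S).card : ℝ) := by nlinarith
      exact_mod_cast h4

end AuxIT

/-- If `H` is a cover graph for `G` via `L` with maximum average colour degree at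
most `d` and all lists of size at least `4d`, then `H` has an independent
transversal with respect to `L`. -/
theorem transversal_of_four_times_average_degree
    {V W : Type} [Fintype V] [Fintype W] [DecidableEq V] [DecidableEq W]
    (d : ℝ) (hd : 0 < d)
    (G : SimpleGraph V) (H : SimpleGraph W) [DecidableRel H.Adj]
    (L : V → Finset W)
    (hcover : IsCoverGraph G H L)
    -- maximum average colour degree at most d
    (havg : ∀ v : V, ∑ c ∈ L v, (H.degree c : ℝ) ≤ d * (L v).card)
    -- list sizes at least 4d
    (hsize : ∀ v : V, 4 * d ≤ ((L v).card : ℝ)) :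
    ∃ f : V → W, (∀ v : V, f v ∈ L v) ∧ ∀ v v' : V, ¬ H.Adj (f v) (f v') := by
  obtain ⟨hdisj, hcov, -⟩ := hcover
  have hpos := ITset_pos (H := H) (L := L) hdisj hcov d hd havg hsize
    (univ : Finset V).card univ le_rfl
  obtain ⟨A, hA⟩ := card_pos.mp hpos
  obtain ⟨-, hA2, hA3⟩ := mem_ITset.mp hA
  choose g hg using fun v : V => Finset.card_eq_one.mp (hA2 v (mem_univ v))
  refine ⟨g, fun v => ?_, fun v v' => ?_⟩
  · have h1 : g v ∈ A ∩ L v := (hg v) ▸ mem_singleton_self (g v)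
    exact (mem_inter.mp h1).2
  · have h1 : g v ∈ A ∩ L v := (hg v) ▸ mem_singleton_self (g v)
    have h2 : g v' ∈ A ∩ L v' := (hg v') ▸ mem_singleton_self (g v')
    exact hA3 _ (mem_inter.mp h1).1 _ (mem_inter.mp h2).1
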